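/- Let A₊, A₋ > 0, γ, Γ > 1, and let ρ₊(n,ρ) be defined implicitly for n, ρ ≥ 0 (not both zero) by A₊ρ₊^γ = A₋ρ₋^Γ and ρρ₋ + nρ₊ = ρ₊ρ₋. Then there exists a constant C depending only on A₊, A₋, γ, Γ such that ρ₊(n,ρ) ≤ C(n^(Γ/γ) + ρ) for all such (n,ρ). -/

import Mathlib

/-- There is a constant `C > 0`, depending only on `A₊, A₋, γ, Γ`,
such that the implicit '+'-phase density satisfies `ρ₊ ≤ C(n^(Γ/γ) + ρ)` whenever
`n, ρ ≥ 0` are not both zero and `ρ₊, ρ₋ > 0` solve `A₊ρ₊^γ = A₋ρ₋^Γ` and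
`ρρ₋ + nρ₊ = ρ₊ρ₋`. -/
theorem stmt_10 (Ap Am Γ γ : ℝ)
    (hAp : 0 < Ap) (hAm : 0 < Am) (hΓ : 1 < Γ) (hγ : 1 < γ) :
    ∃ C : ℝ, 0 < C ∧ ∀ n ρ ρp ρm : ℝ,
      0 ≤ n → 0 ≤ ρ → ¬(n = 0 ∧ ρ = 0) → 0 < ρp → 0 < ρm →
      Ap * ρp ^ γ = Am * ρm ^ Γ → ρ * ρm + n * ρp = ρp * ρm →
      ρp ≤ C * (n ^ (Γ / γ) + ρ) := by
  set K : ℝ := ((2 : ℝ) ^ Γ * Am / Ap) ^ (1 / γ) with hK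
  have hγ0 : (0 : ℝ) < γ := lt_trans one_pos hγ
  have hbase : (0 : ℝ) < (2 : ℝ) ^ Γ * Am / Ap := by positivity
  have hKpos : 0 < K := Real.rpow_pos_of_pos hbase _
  refine ⟨2 + K, by positivity, ?_⟩
  intro n ρ ρp ρm hn hρ _ hρp hρm hpress heq
  have hnγ : 0 ≤ n ^ (Γ / γ) := Real.rpow_nonneg hn _
  rcases le_or_gt (ρp * ρm) (2 * (ρ * ρm)) with h1 | h1
  · -- ρ₊ ≤ 2ρ
    have hρp2 : ρp ≤ 2 * ρ := by
      have := (mul_le_mul_iff_of_pos_right hρm).mp (by linarith [h1] : ρp * ρm ≤ (2 * ρ) * ρm)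
      linarith
    have : (2 : ℝ) * ρ ≤ (2 + K) * (n ^ (Γ / γ) + ρ) := by nlinarith
    linarith
  · -- then n·ρ₊ ≥ ½ ρ₊ρ₋, so ρ₋ ≤ 2n
    have hρm2 : ρm ≤ 2 * n := by
      have h2 : ρp * ρm ≤ 2 * (n * ρp) := by linarith
      have := (mul_le_mul_iff_of_pos_left hρp).mp (by linarith : ρp * ρm ≤ ρp * (2 * n))
      linarith
    -- pressure law bound
    have hstep : ρp ^ γ ≤ ((2 : ℝ) ^ Γ * Am / Ap) * n ^ Γ := by
      have h3 : ρm ^ Γ ≤ (2 * n) ^ Γ :=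
        Real.rpow_le_rpow hρm.le hρm2 (by linarith)
      have h4 : (2 * n) ^ Γ = 2 ^ Γ * n ^ Γ :=
        Real.mul_rpow (by norm_num) hn
      have h5 : Ap * ρp ^ γ ≤ Am * (2 ^ Γ * n ^ Γ) := by
        rw [hpress]; rw [h4] at h3
        exact mul_le_mul_of_nonneg_left h3 hAm.le
      rw [div_mul_eq_mul_div, le_div_iff₀ hAp]
      nlinarith [h5]
    have hρpK : ρp ≤ K * n ^ (Γ / γ) := by
      have h6 : (ρp ^ γ) ^ (1 / γ) ≤ (((2 : ℝ) ^ Γ * Am / Ap) * n ^ Γ) ^ (1 / γ) :=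
        Real.rpow_le_rpow (Real.rpow_nonneg hρp.le _) hstep (by positivity)
      have h7 : (ρp ^ γ) ^ (1 / γ) = ρp := by
        rw [← Real.rpow_mul hρp.le, mul_one_div, div_self hγ0.ne', Real.rpow_one]
      have h8 : (((2 : ℝ) ^ Γ * Am / Ap) * n ^ Γ) ^ (1 / γ)
          = K * n ^ (Γ / γ) := by
        rw [Real.mul_rpow hbase.le (Real.rpow_nonneg hn _),
          ← Real.rpow_mul hn, mul_one_div]
      rw [h7, h8] at h6
      exact h6
    have : K * n ^ (Γ / γ) ≤ (2 + K) * (n ^ (Γ / γ) + ρ) := by nlinarith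
    linarith
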